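/- arXiv:2003.01154 — 2 statements merged into one kernel-verified Lean document; each statement's English description precedes it below -/
import Mathlib

section
/- Let G=(V,E) be a finite simple graph on n vertices, let q ≥ 2 be an integer, let P_1,…,P_ℓ be a partition of V and α > 0 such that for every i and every S ⊆ P_i with |S| ≤ |P_i|/2 one has |∂_{G[P_i]}(S)| ≥ α|S|, and suppose |P_i| ≥ ηn for every i, where η > 0. Then for every β ≥ 0: Z_G(β) − Z*_G(β) ≤ q^n · e^{β(|E| − αηn/2)}. -/
open Classical

noncomputable section

namespace Paper

variable {V : Type*}

/-- The degree of a vertex. -/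
def deg (G : SimpleGraph V) (v : V) : ℕ := (G.neighborSet v).ncard

/-- The volume of a vertex set: the sum of the degrees of its vertices. -/
def vol (G : SimpleGraph V) (S : Set V) : ℕ := ∑ᶠ v ∈ S, deg G v

/-- The edge boundary ∂(S): edges of `G` with exactly one endpoint in `S`. -/
def bdry (G : SimpleGraph V) (S : Set V) : Set (Sym2 V) :=
  {e | e ∈ G.edgeSet ∧ (∃ u ∈ e, u ∈ S) ∧ (∃ v ∈ e, v ∉ S)}

/-- The closure ∇(S): edges of `G` with at least one endpoint in `S`. -/
def cl (G : SimpleGraph V) (S : Set V) : Set (Sym2 V) :=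
  {e | e ∈ G.edgeSet ∧ ∃ u ∈ e, u ∈ S}

/-- The conductance φ_G(S) = |∂(S)| / vol_G(S). -/
def cond (G : SimpleGraph V) (S : Set V) : ℝ :=
  ((bdry G S).ncard : ℝ) / (vol G S : ℝ)

/-- The conductance φ(G) of the graph: the minimum of φ_G(S) over nonempty S
with vol_G(S) ≤ vol_G(V)/2. -/
def graphCond [Fintype V] (G : SimpleGraph V) : ℝ :=
  sInf {x : ℝ | ∃ S : Set V, S.Nonempty ∧ 2 * vol G S ≤ vol G Set.univ ∧ x = cond G S}

/-- The induced subgraph G[P], realised as a graph on the same vertex set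
(vertices outside `P` are isolated). -/
def restrict (G : SimpleGraph V) (P : Set V) : SimpleGraph V where
  Adj u v := G.Adj u v ∧ u ∈ P ∧ v ∈ P
  symm := ⟨fun _ _ h => ⟨h.1.symm, h.2.2, h.2.1⟩⟩
  loopless := ⟨fun _ h => G.irrefl h.1⟩

/-- e(S,T): the number of edges of `G` with one endpoint in `S` and the other in `T \ S`. -/
def eCount (G : SimpleGraph V) (S T : Set V) : ℕ :=
  ({e | e ∈ G.edgeSet ∧ ∃ u v, e = s(u, v) ∧ u ∈ S ∧ v ∈ T \ S}).ncard

/-- φ(S,B) = e(S,B) / ((vol(B∖S)/vol(B)) · e(S, V∖B)). -/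
def condPair (G : SimpleGraph V) (S B : Set V) : ℝ :=
  (eCount G S B : ℝ) /
    (((vol G (B \ S) : ℝ) / (vol G B : ℝ)) * (eCount G S (Set.univ \ B) : ℝ))

/-- An edge is monochromatic under a colouring if all its endpoints get the same colour. -/
def Mono {q : ℕ} (χ : V → Fin q) (e : Sym2 V) : Prop :=
  ∀ u ∈ e, ∀ v ∈ e, χ u = χ v

/-- The number of edges in `F` that are monochromatic under `χ`. -/
def monoCount {q : ℕ} (χ : V → Fin q) (F : Set (Sym2 V)) : ℕ :=
  {e ∈ F | Mono χ e}.ncard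

/-- m_G(χ): the number of monochromatic edges of `G` under `χ`. -/
def mG {q : ℕ} (G : SimpleGraph V) (χ : V → Fin q) : ℕ := monoCount χ G.edgeSet

/-- The q-colour Potts model partition function. -/
def Z [Fintype V] [DecidableEq V] (G : SimpleGraph V) (q : ℕ) (β : ℝ) : ℝ :=
  ∑ ω : V → Fin q, Real.exp (β * (mG G ω : ℝ))

/-- P_1, …, P_ℓ form a partition of the vertex set. -/
def IsPartition {ℓ : ℕ} (P : Fin ℓ → Set V) : Prop :=
  (∀ i j : Fin ℓ, i ≠ j → Disjoint (P i) (P j)) ∧ (⋃ i, P i) = Set.univ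

/-- A set is small (w.r.t. the partition P) if |S ∩ P i| ≤ |P i|/2 for all i. -/
def Small {ℓ : ℕ} (P : Fin ℓ → Set V) (S : Set V) : Prop :=
  ∀ i, ((S ∩ P i).ncard : ℝ) ≤ ((P i).ncard : ℝ) / 2

/-- A set U is sparse if the vertex set of every connected component of G[U] is small. -/
def Sparse {ℓ : ℕ} (G : SimpleGraph V) (P : Fin ℓ → Set V) (U : Set V) : Prop :=
  ∀ u ∈ U, Small P {v | (restrict G U).Reachable u v}

/-- Every `S ⊆ P i` with `|S| ≤ |P i|/2` satisfies `|∂_{G[P i]}(S)| ≥ α |S|`. -/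
def PartExpansion {ℓ : ℕ} (G : SimpleGraph V) (P : Fin ℓ → Set V) (α : ℝ) : Prop :=
  ∀ i, ∀ S ⊆ P i, (S.ncard : ℝ) ≤ ((P i).ncard : ℝ) / 2 →
    α * (S.ncard : ℝ) ≤ ((bdry (restrict G (P i)) S).ncard : ℝ)

/-- A ground state: a colouring constant on each part of the partition. -/
def GroundState {q ℓ : ℕ} (P : Fin ℓ → Set V) (ψ : V → Fin q) : Prop :=
  ∀ i : Fin ℓ, ∀ u ∈ P i, ∀ v ∈ P i, ψ u = ψ v

/-- A state ω is close to a ground state ψ if on each part, more than half of the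
vertices agree with ψ. -/
def CloseTo {q ℓ : ℕ} (P : Fin ℓ → Set V) (ω ψ : V → Fin q) : Prop :=
  ∀ i : Fin ℓ, ((P i).ncard : ℝ) / 2 < ((P i ∩ {v | ω v = ψ v}).ncard : ℝ)

/-- Z*: the contribution to Z from states close to some ground state. -/
def Zstar [Fintype V] [DecidableEq V] {ℓ : ℕ} (G : SimpleGraph V) (P : Fin ℓ → Set V)
    (q : ℕ) (β : ℝ) : ℝ :=
  ∑ ω : V → Fin q,
    if ∃ ψ : V → Fin q, GroundState P ψ ∧ CloseTo P ω ψ then Real.exp (β * (mG G ω : ℝ)) else 0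

/-- The colouring of V that colours γ by `lam` and everything else by `ψ`. -/
def combine {q : ℕ} (γ : Set V) (ψ : V → Fin q) (lam : γ → Fin q) : V → Fin q :=
  fun v => if h : v ∈ γ then lam ⟨v, h⟩ else ψ v

/-- m_G(ψ, γ, λ): the number of edges of ∇(γ) that are monochromatic when γ is
coloured by λ and all other vertices by ψ. -/
def mRes {q : ℕ} (G : SimpleGraph V) (γ : Set V) (ψ : V → Fin q) (lam : γ → Fin q) : ℕ :=
  monoCount (combine γ ψ lam) (cl G γ)

/-- A polymer: a nonempty small set inducing a connected subgraph. -/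
def Polymer {ℓ : ℕ} (G : SimpleGraph V) (P : Fin ℓ → Set V) (γ : Set V) : Prop :=
  γ.Nonempty ∧ (G.induce γ).Connected ∧ Small P γ

/-- Two polymers are compatible if they are disjoint with disjoint edge boundaries. -/
def Compatible (G : SimpleGraph V) (γ γ' : Set V) : Prop :=
  Disjoint γ γ' ∧ Disjoint (bdry G γ) (bdry G γ')

/-- The family of vertex sets of connected components of G[U]. -/
def components (G : SimpleGraph V) (U : Set V) : Set (Set V) :=
  {C | ∃ u ∈ U, C = {v | (restrict G U).Reachable u v}}

private lemma ncard_fiber_sum [Fintype V] {q : ℕ} (ω : V → Fin q) (A : Set V) :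
    ∑ c : Fin q, (A ∩ {v | ω v = c}).ncard = A.ncard := by
  classical
  have h := Finset.card_eq_sum_card_fiberwise
    (f := ω) (s := A.toFinite.toFinset) (t := Finset.univ) (fun x _ => Finset.mem_univ _)
  rw [Set.ncard_eq_toFinset_card _ A.toFinite, h]
  refine Finset.sum_congr rfl fun c _ => ?_
  rw [Set.ncard_eq_toFinset_card _ (A ∩ {v | ω v = c}).toFinite]
  congr 1
  ext v
  simp only [Set.Finite.mem_toFinset, Finset.mem_filter]
  exact and_congr_left fun _ => Iff.rfl

private lemma restrict_edge_mem {G : SimpleGraph V} {A : Set V} {e : Sym2 V}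
    (he : e ∈ (restrict G A).edgeSet) : e ∈ G.edgeSet ∧ ∀ u ∈ e, u ∈ A := by
  induction e using Sym2.ind with
  | _ a b =>
    rw [SimpleGraph.mem_edgeSet] at he
    obtain ⟨h1, h2, h3⟩ := he
    refine ⟨h1, fun u hu => ?_⟩
    rcases Sym2.mem_iff.mp hu with h | h <;> subst h <;> assumption

private lemma sum_card_le_two_mul {ι β : Type*} [Fintype ι] [DecidableEq β]
    (Nf : Finset β) (B : ι → Finset β) (hsub : ∀ c, B c ⊆ Nf)
    (hmul : ∀ e, (Finset.univ.filter (fun c => e ∈ B c)).card ≤ 2) :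
    ∑ c : ι, (B c).card ≤ 2 * Nf.card := by
  classical
  calc ∑ c : ι, (B c).card
      = ∑ c : ι, ∑ e ∈ Nf, if e ∈ B c then 1 else 0 := by
        refine Finset.sum_congr rfl fun c _ => ?_
        rw [← Finset.card_filter]
        congr 1
        rw [Finset.filter_mem_eq_inter, Finset.inter_eq_right.mpr (hsub c)]
    _ = ∑ e ∈ Nf, ∑ c : ι, if e ∈ B c then 1 else 0 := Finset.sum_comm
    _ = ∑ e ∈ Nf, (Finset.univ.filter fun c => e ∈ B c).card := by
        refine Finset.sum_congr rfl fun e _ => (Finset.card_filter _ _).symm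
    _ ≤ ∑ _e ∈ Nf, 2 := Finset.sum_le_sum fun e _ => hmul e
    _ = 2 * Nf.card := by rw [Finset.sum_const, smul_eq_mul, mul_comm]

private lemma mG_le [Fintype V] [DecidableEq V] (G : SimpleGraph V) {ℓ : ℕ}
    (P : Fin ℓ → Set V) (hP : IsPartition P) {q : ℕ}
    {α : ℝ} (hα : 0 < α) (hexp : PartExpansion G P α)
    {η : ℝ} (hsize : ∀ i, η * (Fintype.card V : ℝ) ≤ ((P i).ncard : ℝ))
    (ω : V → Fin q) (hω : ¬ ∃ ψ : V → Fin q, GroundState P ψ ∧ CloseTo P ω ψ) :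
    (mG G ω : ℝ) ≤ (G.edgeSet.ncard : ℝ) - α * η * (Fintype.card V : ℝ) / 2 := by
  classical
  -- extract a part with no majority colour
  obtain ⟨i, hi⟩ : ∃ i : Fin ℓ, ∀ c : Fin q,
      ((P i ∩ {v | ω v = c}).ncard : ℝ) ≤ ((P i).ncard : ℝ) / 2 := by
    by_contra hno
    push_neg at hno
    choose c hc using hno
    have hidx : ∀ v : V, ∃ i, v ∈ P i := by
      intro v
      have hv : v ∈ ⋃ i, P i := hP.2.symm ▸ Set.mem_univ v
      simpa [Set.mem_iUnion] using hv
    choose idx hidx' using hidx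
    have hidxeq : ∀ {v : V} {j : Fin ℓ}, v ∈ P j → idx v = j := by
      intro v j hv
      by_contra hne
      exact Set.disjoint_left.mp (hP.1 _ _ hne) (hidx' v) hv
    refine hω ⟨fun v => c (idx v), ?_, ?_⟩
    · intro j u hu v hv
      simp only [hidxeq hu, hidxeq hv]
    · intro j
      refine lt_of_lt_of_le (hc j) ?_
      have hsub : P j ∩ {v | ω v = c j} ⊆ P j ∩ {v | ω v = c (idx v)} := by
        rintro v ⟨hv1, hv2⟩
        exact ⟨hv1, by simp only [Set.mem_setOf_eq, hidxeq hv1]; exact hv2⟩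
      exact_mod_cast Set.ncard_le_ncard hsub (Set.toFinite _)
  set S : Fin q → Set V := fun c => P i ∩ {v | ω v = c} with hSdef
  set N : Set (Sym2 V) := {e | e ∈ G.edgeSet ∧ ¬ Mono ω e} with hNdef
  -- every boundary edge of a colour class is a non-monochromatic edge of G
  have hSsub : ∀ c, bdry (restrict G (P i)) (S c) ⊆ N := by
    intro c e he
    obtain ⟨heE, ⟨u, hue, huS⟩, ⟨v, hve, hvS⟩⟩ := he
    obtain ⟨heG, hmem⟩ := restrict_edge_mem heE
    refine ⟨heG, fun hm => ?_⟩
    have hvP : v ∈ P i := hmem v hve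
    have hne : ω v ≠ c := fun h => hvS ⟨hvP, h⟩
    exact hne ((hm v hve u hue).trans huS.2)
  -- each edge lies in at most two colour-class boundaries
  have hmul : ∀ e : Sym2 V,
      (Finset.univ.filter
        (fun c : Fin q => e ∈ (bdry (restrict G (P i)) (S c)).toFinite.toFinset)).card ≤ 2 := by
    intro e
    induction e using Sym2.ind with
    | _ a b =>
      have hsub : (Finset.univ.filter
          (fun c : Fin q => s(a, b) ∈ (bdry (restrict G (P i)) (S c)).toFinite.toFinset)) ⊆
          {ω a, ω b} := by
        intro c hc
        simp only [Finset.mem_filter, Set.Finite.mem_toFinset] at hc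
        obtain ⟨-, -, ⟨u, hue, huS⟩, -⟩ := hc
        rcases Sym2.mem_iff.mp hue with h | h <;> subst h
        · exact Finset.mem_insert.mpr (Or.inl huS.2.symm)
        · exact Finset.mem_insert.mpr (Or.inr (Finset.mem_singleton.mpr huS.2.symm))
      exact (Finset.card_le_card hsub).trans
        ((Finset.card_insert_le _ _).trans (by simp))
  -- summing the expansion bound over colours
  have h3 : ∑ c : Fin q, (bdry (restrict G (P i)) (S c)).ncard ≤ 2 * N.ncard := by
    have h := sum_card_le_two_mul (N.toFinite.toFinset)
      (fun c => (bdry (restrict G (P i)) (S c)).toFinite.toFinset)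
      (fun c => Set.Finite.toFinset_subset_toFinset.mpr (hSsub c)) hmul
    calc ∑ c : Fin q, (bdry (restrict G (P i)) (S c)).ncard
        = ∑ c : Fin q, ((bdry (restrict G (P i)) (S c)).toFinite.toFinset).card :=
          Finset.sum_congr rfl fun c _ => Set.ncard_eq_toFinset_card _ _
      _ ≤ 2 * (N.toFinite.toFinset).card := h
      _ = 2 * N.ncard := by rw [← Set.ncard_eq_toFinset_card _ N.toFinite]
  have hchain : α * ((P i).ncard : ℝ) ≤ 2 * (N.ncard : ℝ) := by
    have h2 : α * ((P i).ncard : ℝ) = ∑ c : Fin q, α * ((S c).ncard : ℝ) := by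
      rw [← Finset.mul_sum]
      congr 1
      rw [← Nat.cast_sum]
      exact_mod_cast congrArg (Nat.cast (R := ℝ)) (ncard_fiber_sum ω (P i)).symm
    calc α * ((P i).ncard : ℝ) = ∑ c : Fin q, α * ((S c).ncard : ℝ) := h2
      _ ≤ ∑ c : Fin q, ((bdry (restrict G (P i)) (S c)).ncard : ℝ) :=
          Finset.sum_le_sum fun c _ => hexp i (S c) Set.inter_subset_left (hi c)
      _ ≤ 2 * (N.ncard : ℝ) := by exact_mod_cast h3
  -- monochromatic + non-monochromatic edges partition the edge set
  have hsplit : mG G ω + N.ncard = G.edgeSet.ncard := by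
    rw [mG, monoCount, ← Set.ncard_union_eq ?_ (Set.toFinite _) (Set.toFinite _)]
    · congr 1
      ext e
      simp only [Set.mem_union, Set.mem_setOf_eq, hNdef]
      tauto
    · rw [Set.disjoint_left]
      rintro e ⟨-, hm⟩ ⟨-, hnm⟩
      exact hnm hm
  have hE : (mG G ω : ℝ) = (G.edgeSet.ncard : ℝ) - (N.ncard : ℝ) := by
    have := congrArg (Nat.cast (R := ℝ)) hsplit
    push_cast at this
    linarith
  have hPi : α * η * (Fintype.card V : ℝ) ≤ α * ((P i).ncard : ℝ) := by
    rw [mul_assoc]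
    exact mul_le_mul_of_nonneg_left (hsize i) hα.le
  rw [hE]
  linarith

/-- Z − Z* ≤ qⁿ e^{β(|E| − αηn/2)}. -/
theorem statement4 [Fintype V] [DecidableEq V] (G : SimpleGraph V) {ℓ : ℕ}
    (P : Fin ℓ → Set V) (hP : IsPartition P) (q : ℕ) (hq : 2 ≤ q)
    (α : ℝ) (hα : 0 < α) (hexp : PartExpansion G P α)
    (η : ℝ) (hη : 0 < η) (hsize : ∀ i, η * (Fintype.card V : ℝ) ≤ ((P i).ncard : ℝ))
    (β : ℝ) (hβ : 0 ≤ β) :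
    Z G q β - Zstar G P q β ≤
      (q : ℝ) ^ (Fintype.card V) *
        Real.exp (β * ((G.edgeSet.ncard : ℝ) - α * η * (Fintype.card V : ℝ) / 2)) := by
  classical
  have hcard : (Finset.univ : Finset (V → Fin q)).card = q ^ Fintype.card V := by
    simp [Finset.card_univ]
  rw [Z, Zstar, ← Finset.sum_sub_distrib]
  refine le_trans (Finset.sum_le_sum (fun ω _ =>
    (?_ : _ ≤ Real.exp (β * ((G.edgeSet.ncard : ℝ) - α * η * (Fintype.card V : ℝ) / 2))))) ?_
  · by_cases h : ∃ ψ : V → Fin q, GroundState P ψ ∧ CloseTo P ω ψ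
    · simp only [h, if_true, sub_self]
      positivity
    · simp only [h, if_false, sub_zero]
      exact Real.exp_le_exp.mpr
        (mul_le_mul_of_nonneg_left (mG_le G P hP hα hexp hsize ω h) hβ)
  · rw [Finset.sum_const, hcard, nsmul_eq_mul, Nat.cast_pow]

end Paper

end
end

section
/- Let G=(V,E) be a finite simple graph, let B ⊆ P ⊆ V with vol_G(B) > 0, and let ℓ ≥ 1 be a real number such that e(P∖B, B) ≥ e(P∖B, V)/ℓ. Then φ_G(P) ≤ ℓ·φ_G(B). -/
open Classical

noncomputable section

namespace Paper

variable {V : Type*}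

/-- Edges with one endpoint in X and the other in Y. -/
def between (G : SimpleGraph V) (X Y : Set V) : Set (Sym2 V) :=
  {e | e ∈ G.edgeSet ∧ ∃ u v, e = s(u, v) ∧ u ∈ X ∧ v ∈ Y}

lemma eCount_eq_between (G : SimpleGraph V) (S T : Set V) :
    eCount G S T = (between G S (T \ S)).ncard := rfl

lemma between_comm (G : SimpleGraph V) (X Y : Set V) :
    between G X Y = between G Y X := by
  ext e
  constructor <;> rintro ⟨hE, u, v, rfl, hu, hv⟩ <;>
    exact ⟨hE, v, u, Sym2.eq_swap, hv, hu⟩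

lemma bdry_eq_between (G : SimpleGraph V) (S : Set V) :
    bdry G S = between G S Sᶜ := by
  ext e
  induction e using Sym2.inductionOn with
  | hf a b =>
    simp only [bdry, between, Set.mem_setOf_eq, Sym2.mem_iff]
    constructor
    · rintro ⟨hE, ⟨u, (rfl | rfl), hu⟩, ⟨v, (rfl | rfl), hv⟩⟩
      · exact absurd hu hv
      · exact ⟨hE, u, v, rfl, hu, hv⟩
      · exact ⟨hE, u, v, Sym2.eq_swap, hu, hv⟩
      · exact absurd hu hv
    · rintro ⟨hE, u, v, huv, hu, hv⟩
      rcases Sym2.eq_iff.mp huv with ⟨rfl, rfl⟩ | ⟨rfl, rfl⟩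
      · exact ⟨hE, ⟨a, Or.inl rfl, hu⟩, ⟨b, Or.inr rfl, hv⟩⟩
      · exact ⟨hE, ⟨b, Or.inr rfl, hu⟩, ⟨a, Or.inl rfl, hv⟩⟩

lemma between_union_right (G : SimpleGraph V) (X Y₁ Y₂ : Set V) :
    between G X (Y₁ ∪ Y₂) = between G X Y₁ ∪ between G X Y₂ := by
  ext e
  constructor
  · rintro ⟨hE, u, v, rfl, hu, (hv | hv)⟩
    · exact Or.inl ⟨hE, u, v, rfl, hu, hv⟩
    · exact Or.inr ⟨hE, u, v, rfl, hu, hv⟩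
  · rintro (⟨hE, u, v, rfl, hu, hv⟩ | ⟨hE, u, v, rfl, hu, hv⟩)
    · exact ⟨hE, u, v, rfl, hu, Or.inl hv⟩
    · exact ⟨hE, u, v, rfl, hu, Or.inr hv⟩

lemma between_disjoint (G : SimpleGraph V) (X Y₁ Y₂ : Set V)
    (hXY₂ : Disjoint X Y₂) (hY : Disjoint Y₁ Y₂) :
    Disjoint (between G X Y₁) (between G X Y₂) := by
  rw [Set.disjoint_left]
  rintro e ⟨hE, u, v, rfl, hu, hv⟩ ⟨_, u', v', huv, hu', hv'⟩
  rcases Sym2.eq_iff.mp huv with ⟨rfl, rfl⟩ | ⟨rfl, rfl⟩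
  · exact Set.disjoint_left.mp hY hv hv'
  · exact Set.disjoint_left.mp hXY₂ hu hv'

lemma vol_mono [Fintype V] (G : SimpleGraph V) {S T : Set V} (h : S ⊆ T) :
    vol G S ≤ vol G T := by
  unfold vol
  rw [← Set.coe_toFinset S, ← Set.coe_toFinset T, finsum_mem_coe_finset,
    finsum_mem_coe_finset]
  exact Finset.sum_le_sum_of_subset (Set.toFinset_subset_toFinset.mpr h)

/-- if e(P∖B, B) ≥ e(P∖B, V)/ℓ then φ(P) ≤ ℓ·φ(B). -/
theorem statement14 [Fintype V] (G : SimpleGraph V) (B P : Set V) (hBP : B ⊆ P)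
    (hvol : 0 < vol G B) (ℓ : ℝ) (hℓ : 1 ≤ ℓ)
    (he : (eCount G (P \ B) Set.univ : ℝ) / ℓ ≤ (eCount G (P \ B) B : ℝ)) :
    cond G P ≤ ℓ * cond G B := by
  classical
  -- disjointness facts
  have dB_PB : Disjoint B (P \ B) := Set.disjoint_sdiff_right
  have dB_Pc : Disjoint B Pᶜ := Set.disjoint_left.mpr fun x hx hc => hc (hBP hx)
  have dPB_Pc : Disjoint (P \ B) Pᶜ := Set.disjoint_left.mpr fun x hx hc => hc hx.1
  -- set identities
  have hPsplit : B ∪ (P \ B) = P := Set.union_diff_cancel hBP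
  have hBc : Bᶜ = (P \ B) ∪ Pᶜ := by
    ext x
    simp only [Set.mem_compl_iff, Set.mem_union, Set.mem_diff]
    constructor
    · intro h
      by_cases hP : x ∈ P
      · exact Or.inl ⟨hP, h⟩
      · exact Or.inr hP
    · rintro (⟨_, h⟩ | h)
      · exact h
      · exact fun hB => h (hBP hB)
  have hUc : Set.univ \ (P \ B) = B ∪ Pᶜ := by
    ext x
    simp only [Set.mem_diff, Set.mem_union, Set.mem_compl_iff, Set.mem_univ, true_and]
    constructor
    · intro h
      by_cases hP : x ∈ P
      · by_cases hB : x ∈ B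
        · exact Or.inl hB
        · exact absurd ⟨hP, hB⟩ h
      · exact Or.inr hP
    · rintro (hB | hP) ⟨hP', hB'⟩
      · exact hB' hB
      · exact hP hP' 
  have hBdiff : B \ (P \ B) = B := by
    ext x; by_cases hB : x ∈ B <;> simp [hB]
  -- abbreviations
  set a : ℕ := (between G B Pᶜ).ncard with ha
  set b : ℕ := (between G B (P \ B)).ncard with hb
  set c : ℕ := (between G (P \ B) Pᶜ).ncard with hc
  -- cardinality identities
  have hbdryP : (bdry G P).ncard = a + c := by
    have hsplit : between G Pᶜ P = between G Pᶜ B ∪ between G Pᶜ (P \ B) := by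
      rw [← between_union_right, hPsplit]
    rw [bdry_eq_between, between_comm, hsplit,
      Set.ncard_union_eq (between_disjoint G Pᶜ B (P \ B) dPB_Pc.symm dB_PB)
        (Set.toFinite _) (Set.toFinite _),
      between_comm G Pᶜ B, between_comm G Pᶜ (P \ B)]
  have hbdryB : (bdry G B).ncard = b + a := by
    rw [bdry_eq_between, hBc, between_union_right,
      Set.ncard_union_eq (between_disjoint G B (P \ B) Pᶜ dB_Pc dPB_Pc)
        (Set.toFinite _) (Set.toFinite _)]
  have heB : eCount G (P \ B) B = b := by
    rw [eCount_eq_between, hBdiff, between_comm]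
  have heU : eCount G (P \ B) Set.univ = b + c := by
    rw [eCount_eq_between, hUc, between_union_right,
      Set.ncard_union_eq (between_disjoint G (P \ B) B Pᶜ dPB_Pc dB_Pc)
        (Set.toFinite _) (Set.toFinite _), between_comm G (P \ B) B]
  -- volume facts
  have hvolP : 0 < vol G P := lt_of_lt_of_le hvol (vol_mono G hBP)
  have hvolBP : (vol G B : ℝ) ≤ (vol G P : ℝ) := by exact_mod_cast vol_mono G hBP
  have hvolB' : (0 : ℝ) < (vol G B : ℝ) := by exact_mod_cast hvol
  -- numeric hypothesis
  have hℓ0 : (0 : ℝ) < ℓ := lt_of_lt_of_le one_pos hℓ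
  have hbc : (b : ℝ) + (c : ℝ) ≤ ℓ * (b : ℝ) := by
    rw [heU, heB] at he
    rw [div_le_iff₀ hℓ0] at he
    push_cast at he
    linarith [mul_comm (b : ℝ) ℓ, he]
  -- conclude
  unfold cond
  rw [hbdryP, hbdryB, ← mul_div_assoc]
  have hnum : ((a + c : ℕ) : ℝ) ≤ ℓ * ((b + a : ℕ) : ℝ) := by
    push_cast
    have h0a : (0 : ℝ) ≤ (a : ℝ) := Nat.cast_nonneg a
    have h0b : (0 : ℝ) ≤ (b : ℝ) := Nat.cast_nonneg b
    nlinarith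
  exact div_le_div₀ (le_trans (Nat.cast_nonneg _) hnum) hnum hvolB' hvolBP

end Paper

end
end
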